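/- Let p be a prime and n ≥ 3 an integer such that p divides neither n nor n − 1. Then d(n,p) = 1. -/

import Mathlib

/-- `d(n,p)`: the greatest common divisor of the integers `⌊n·i/p⌋` over all
integers `i` with `0 < i < p`. -/
def dnp (p n : ℕ) : ℕ :=
  Finset.gcd (Finset.Ico 1 p) fun i => n * i / p

/-- Let `p` be a prime and `n ≥ 3` an integer such that `p` divides neither `n`
nor `n - 1`. Then `d(n,p) = 1`. -/
theorem dnp_eq_one (p : ℕ) (hp : p.Prime) (n : ℕ) (hn : 3 ≤ n)
    (hpn : ¬ p ∣ n) (hpn1 : ¬ p ∣ n - 1) :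
    dnp p n = 1 := by
  have hp2 : 2 ≤ p := hp.two_le
  haveI : Fact p.Prime := ⟨hp⟩
  have hnz : (n : ZMod p) ≠ 0 := by
    rwa [Ne, ZMod.natCast_eq_zero_iff]
  have hn1 : (n : ZMod p) ≠ 1 := by
    intro h
    apply hpn1
    rw [← ZMod.natCast_eq_zero_iff]
    push_cast [Nat.cast_sub (by omega : 1 ≤ n)]
    rw [h]; ring
  set u : ZMod p := (-1) * (n : ZMod p)⁻¹ with hu
  have hu0 : u ≠ 0 := by
    apply mul_ne_zero (neg_ne_zero.mpr one_ne_zero)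
    exact inv_ne_zero hnz
  set i := u.val with hi
  have hiu : ((i : ℕ) : ZMod p) = u := ZMod.natCast_rightInverse u
  have hilt : i < p := ZMod.val_lt u
  have hipos : 0 < i := by
    rcases Nat.eq_zero_or_pos i with h | h
    · exfalso; apply hu0; rw [← hiu, h, Nat.cast_zero]
    · exact h
  have hine : i ≠ p - 1 := by
    intro h
    apply hn1
    have : u = -1 := by
      rw [← hiu, h]
      push_cast [Nat.cast_sub (by omega : 1 ≤ p)]
      simp
    have h2 : (-1 : ZMod p) * (n : ZMod p)⁻¹ = -1 := this
    have h3 : (n : ZMod p)⁻¹ = 1 := by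
      have := mul_left_cancel₀ (neg_ne_zero.mpr (one_ne_zero : (1 : ZMod p) ≠ 0)) 
        (h2.trans (mul_one (-1 : ZMod p)).symm)
      exact this
    have := ZMod.mul_inv_of_unit (n : ZMod p) (Ne.isUnit hnz)
    rw [h3, mul_one] at this
    exact this
  -- key modular fact: n*i ≡ p-1 [MOD p]
  have hmod : (n * i) % p = p - 1 := by
    have hcast : ((n * i : ℕ) : ZMod p) = ((p - 1 : ℕ) : ZMod p) := by
      push_cast [Nat.cast_sub (by omega : 1 ≤ p)]
      rw [hiu, hu]
      rw [show (n : ZMod p) * (-1 * (n : ZMod p)⁻¹) = -((n : ZMod p) * (n : ZMod p)⁻¹) by ring]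
      rw [ZMod.mul_inv_of_unit (n : ZMod p) (Ne.isUnit hnz)]
      simp
    have := (ZMod.natCast_eq_natCast_iff _ _ _).mp hcast
    have h2 : (p - 1) % p = p - 1 := Nat.mod_eq_of_lt (by omega)
    unfold Nat.ModEq at this
    omega
  set d := dnp p n with hd
  set q := n / p with hq
  set r := n % p with hr
  have hrn : n = p * q + r := (Nat.div_add_mod n p).symm
  have hr1 : 1 ≤ r := by
    rcases Nat.eq_zero_or_pos r with h | h
    · exact absurd (Nat.dvd_of_mod_eq_zero h) hpn
    · exact h
  have hrlt : r < p := Nat.mod_lt _ (by omega)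
  set A := n * i / p with hA
  have hAeq : n * i = p * A + (p - 1) := by
    have h := Nat.div_add_mod (n * i) p
    rw [← hA] at h
    omega
  have hmul : n * (i + 1) = n * i + n := by ring
  have hBe : n * (i + 1) = p * (A + q + 1) + (r - 1) := by
    have e1 : p * (A + q + 1) = p * A + p * q + p := by ring
    omega
  have hdivB : n * (i + 1) / p = A + q + 1 := by
    rw [hBe, Nat.mul_add_div (by omega)]
    rw [Nat.div_eq_of_lt (by omega)]
  have hdq : d ∣ q := by
    have := Finset.gcd_dvd (f := fun j => n * j / p)
      (show 1 ∈ Finset.Ico 1 p by simp; omega)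
    rw [mul_one] at this
    exact this
  have hdA : d ∣ A := by
    have := Finset.gcd_dvd (f := fun j => n * j / p)
      (show i ∈ Finset.Ico 1 p by simp; omega)
    exact this
  have hdB : d ∣ A + q + 1 := by
    have := Finset.gcd_dvd (f := fun j => n * j / p)
      (show i + 1 ∈ Finset.Ico 1 p by simp; omega)
    rw [← hdivB]
    exact this
  have : d ∣ 1 := by
    have h1 : d ∣ A + q := Nat.dvd_add hdA hdq
    have := Nat.dvd_sub hdB h1
    simpa using this
  exact Nat.dvd_one.mp this
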